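/- Suppose a = 0 (the case of Frobenius angle θ = π/2). Then for every positive integer X: M(X) = q^{X/2} if X ≡ 0 (mod 4); M(X) = q^{(X−1)/2} if X ≡ 1 (mod 4); M(X) = −q^{X/2} if X ≡ 2 (mod 4); M(X) = −q^{(X−1)/2} if X ≡ 3 (mod 4). Consequently |M(X)| ≤ q^{X/2} for all X ≥ 1, with equality if and only if X is even. -/
import Mathlib


open Real Filter

/-- The coefficient sequence `c_N` with `c_0 = 1`, `c_1 = a - q - 1`,
`c_2 = a*c_1 - q*c_0 + q`, and `c_N = a*c_{N-1} - q*c_{N-2}` for `N ≥ 3`;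
these are the Taylor coefficients at `u = 0` of `(1-u)(1-qu)/(1-au+qu²)`,
the reciprocal of the zeta function of an elliptic curve over `F_q` with
Frobenius trace `a`. -/
def mertC (q a : ℤ) : ℕ → ℤ
  | 0 => 1
  | 1 => a - q - 1
  | 2 => a * (a - q - 1) - q * 1 + q
  | (N + 3) => a * mertC q a (N + 2) - q * mertC q a (N + 1)

/-- `M(X) = ∑_{N=0}^{X-1} c_N`, the Mertens summatory function of the
Möbius function of an elliptic curve over `F_q` with Frobenius trace `a`. -/
def mertM (q a : ℤ) (X : ℕ) : ℤ := ∑ N ∈ Finset.range X, mertC q a N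

lemma mertC_even (q : ℤ) : ∀ k : ℕ, mertC q 0 (2*k+2) = 0 := by
  intro k
  induction k with
  | zero => show mertC q 0 2 = 0; simp [mertC]
  | succ n ih =>
    rw [show 2*(n+1)+2 = (2*n+1)+3 from by ring, mertC,
      show 2*n+1+1 = 2*n+2 from by ring, ih]
    ring

lemma mertC_odd (q : ℤ) : ∀ k : ℕ, mertC q 0 (2*k+1) = (-q)^k * (-q-1) := by
  intro k
  induction k with
  | zero => show mertC q 0 1 = _; simp [mertC]
  | succ n ih =>
    rw [show 2*(n+1)+1 = 2*n+3 from by ring, mertC,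
      show 2*n+1+1 = 2*n+2 from by ring] at *
    rw [ih]
    ring

lemma mertM_succ (q a : ℤ) (X : ℕ) :
    mertM q a (X+1) = mertM q a X + mertC q a X := by
  simp [mertM, Finset.sum_range_succ]

lemma mertM_key (q : ℤ) : ∀ k : ℕ,
    mertM q 0 (4*k+1) = q^(2*k) ∧ mertM q 0 (4*k+2) = -q^(2*k+1) ∧
    mertM q 0 (4*k+3) = -q^(2*k+1) ∧ mertM q 0 (4*k+4) = q^(2*k+2) := by
  intro k
  induction k with
  | zero =>
    refine ⟨?_, ?_, ?_, ?_⟩ <;>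
      simp [mertM, Finset.sum_range_succ, mertC] <;> ring
  | succ n ih =>
    have h1 : mertM q 0 (4*(n+1)+1) = q^(2*(n+1)) := by
      have hc : mertC q 0 (4*n+4) = 0 := by
        rw [show 4*n+4 = 2*(2*n+1)+2 from by ring]; exact mertC_even q _
      rw [show 4*(n+1)+1 = (4*n+4)+1 from by ring, mertM_succ, hc, ih.2.2.2]
      ring
    have h2 : mertM q 0 (4*(n+1)+2) = -q^(2*(n+1)+1) := by
      have hc : mertC q 0 (4*(n+1)+1) = q^(2*n+2) * (-q-1) := by
        rw [show 4*(n+1)+1 = 2*(2*n+2)+1 from by ring, mertC_odd,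
          Even.neg_pow ⟨n+1, by ring⟩]
      rw [show 4*(n+1)+2 = (4*(n+1)+1)+1 from by ring, mertM_succ, h1, hc]
      ring
    have h3 : mertM q 0 (4*(n+1)+3) = -q^(2*(n+1)+1) := by
      have hc : mertC q 0 (4*(n+1)+2) = 0 := by
        rw [show 4*(n+1)+2 = 2*(2*n+2)+2 from by ring]; exact mertC_even q _
      rw [show 4*(n+1)+3 = (4*(n+1)+2)+1 from by ring, mertM_succ, h2, hc]
      ring
    have h4 : mertM q 0 (4*(n+1)+4) = q^(2*(n+1)+2) := by
      have hc : mertC q 0 (4*(n+1)+3) = -(q^(2*n+3)) * (-q-1) := by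
        rw [show 4*(n+1)+3 = 2*(2*n+3)+1 from by ring, mertC_odd,
          Odd.neg_pow ⟨n+1, by ring⟩]
      rw [show 4*(n+1)+4 = (4*(n+1)+3)+1 from by ring, mertM_succ, h3, hc]
      ring
    exact ⟨h1, h2, h3, h4⟩

theorem mertens_case_trace_zero (q a : ℤ) (hq : 2 ≤ q) (ha : a = 0) :
    ∀ X : ℕ, 1 ≤ X →
      (X % 4 = 0 → mertM q a X = q ^ (X / 2)) ∧
      (X % 4 = 1 → mertM q a X = q ^ ((X - 1) / 2)) ∧
      (X % 4 = 2 → mertM q a X = -q ^ (X / 2)) ∧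
      (X % 4 = 3 → mertM q a X = -q ^ ((X - 1) / 2)) ∧
      |(mertM q a X : ℝ)| ≤ (q : ℝ) ^ ((X : ℝ) / 2) ∧
      (|(mertM q a X : ℝ)| = (q : ℝ) ^ ((X : ℝ) / 2) ↔ Even X) := by
  subst ha
  intro X hX
  have key := mertM_key q
  have hq0 : (0:ℤ) ≤ q := by omega
  have hq1 : (1:ℝ) < (q:ℝ) := by exact_mod_cast (by omega : (1:ℤ) < q)
  have h0 : X % 4 = 0 → mertM q 0 X = q ^ (X / 2) := by
    intro h
    obtain ⟨m, rfl⟩ : ∃ m, X = 4*m+4 := ⟨X/4 - 1, by omega⟩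
    rw [show (4*m+4)/2 = 2*m+2 from by omega]
    exact (key m).2.2.2
  have h1 : X % 4 = 1 → mertM q 0 X = q ^ ((X-1) / 2) := by
    intro h
    obtain ⟨m, rfl⟩ : ∃ m, X = 4*m+1 := ⟨X/4, by omega⟩
    rw [show (4*m+1-1)/2 = 2*m from by omega]
    exact (key m).1
  have h2 : X % 4 = 2 → mertM q 0 X = -q ^ (X / 2) := by
    intro h
    obtain ⟨m, rfl⟩ : ∃ m, X = 4*m+2 := ⟨X/4, by omega⟩
    rw [show (4*m+2)/2 = 2*m+1 from by omega]
    exact (key m).2.1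
  have h3 : X % 4 = 3 → mertM q 0 X = -q ^ ((X-1) / 2) := by
    intro h
    obtain ⟨m, rfl⟩ : ∃ m, X = 4*m+3 := ⟨X/4, by omega⟩
    rw [show (4*m+3-1)/2 = 2*m+1 from by omega]
    exact (key m).2.2.1
  refine ⟨h0, h1, h2, h3, ?_⟩
  by_cases hE : Even X
  · have hm2 : X % 2 = 0 := Nat.even_iff.mp hE
    have habs : |mertM q 0 X| = q ^ (X/2) := by
      rcases (by omega : X % 4 = 0 ∨ X % 4 = 2) with h | h
      · rw [h0 h]; exact abs_of_nonneg (pow_nonneg hq0 _)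
      · rw [h2 h, abs_neg]; exact abs_of_nonneg (pow_nonneg hq0 _)
    have hcast : ((X:ℝ))/2 = ((X/2 : ℕ) : ℝ) := by
      have : (X:ℝ) = 2 * ((X/2 : ℕ) : ℝ) := by exact_mod_cast (by omega : X = 2*(X/2))
      linarith
    have hre : |(mertM q 0 X : ℝ)| = (q:ℝ) ^ ((X:ℝ)/2) := by
      rw [← Int.cast_abs, habs, hcast, Real.rpow_natCast]
      push_cast
      ring
    exact ⟨le_of_eq hre, ⟨fun _ => hE, fun _ => hre⟩⟩
  · have hm2 : X % 2 = 1 := Nat.odd_iff.mp (Nat.not_even_iff_odd.mp hE)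
    have habs : |mertM q 0 X| = q ^ ((X-1)/2) := by
      rcases (by omega : X % 4 = 1 ∨ X % 4 = 3) with h | h
      · rw [h1 h]; exact abs_of_nonneg (pow_nonneg hq0 _)
      · rw [h3 h, abs_neg]; exact abs_of_nonneg (pow_nonneg hq0 _)
    have hlt : |(mertM q 0 X : ℝ)| < (q:ℝ) ^ ((X:ℝ)/2) := by
      rw [← Int.cast_abs, habs]
      have e1 : ((q ^ ((X-1)/2) : ℤ) : ℝ) = (q:ℝ) ^ ((((X-1)/2 : ℕ)) : ℝ) := by
        rw [Real.rpow_natCast]; push_cast; ring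
      rw [e1]
      apply Real.rpow_lt_rpow_left_iff hq1 |>.mpr
      have : (X:ℝ) = 2 * (((X-1)/2 : ℕ) : ℝ) + 1 := by
        exact_mod_cast (by omega : X = 2*((X-1)/2) + 1)
      linarith
    exact ⟨hlt.le, ⟨fun h => absurd h hlt.ne, fun h => absurd h hE⟩⟩
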